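/- arXiv:1212.6385 — 5 statements merged into one kernel-verified Lean document; each statement's English description precedes it below -/
import Mathlib

section
/- Stable Splitting Lemma: Let V and Ṽ be finite-dimensional real vector spaces, a a symmetric positive definite bilinear form on V, ã a symmetric positive definite bilinear form on Ṽ, b a symmetric positive semidefinite bilinear form on V, and Q : Ṽ → V, Q̃ : V → Ṽ linear maps. Assume there are constants C₁, C₂, C₃, C₄ > 0 such that for all ṽ ∈ Ṽ and v ∈ V: (i) a(Qṽ, Qṽ) ≤ C₁ ã(ṽ, ṽ); (ii) ã(Q̃v, Q̃v) ≤ C₂ a(v, v); (iii) b(v − Q(Q̃v), v − Q(Q̃v)) ≤ C₃ a(v, v); (iv) a(w, w) ≤ C₄ b(w, w) for all w ∈ V. Then for every v ∈ V, (1/(2·max(C₁, C₄))) · a(v, v) ≤ inf { b(w, w) + ã(ṽ, ṽ) : w ∈ V, ṽ ∈ Ṽ, v = w + Qṽ } ≤ (C₂ + C₃) · a(v, v). -/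
/-- **Stable Splitting Lemma** (auxiliary space method).  Let `V`, `tV` be
finite-dimensional real vector spaces, `a`, `ta` symmetric positive definite bilinear
forms on `V` resp. `tV`, `b` a symmetric positive semidefinite bilinear form on `V`, and
`Q : tV → V`, `tQ : V → tV` linear maps satisfying the ASM direct estimates (i)–(iv).
Then `a(v,v)` is equivalent, with the stated constants, to
`inf { b(w,w) + ta(ṽ,ṽ) : v = w + Q ṽ }`. -/
theorem stable_splitting
    (V tV : Type*) [AddCommGroup V] [Module ℝ V] [FiniteDimensional ℝ V]
    [AddCommGroup tV] [Module ℝ tV] [FiniteDimensional ℝ tV]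
    (a : V →ₗ[ℝ] V →ₗ[ℝ] ℝ) (ta : tV →ₗ[ℝ] tV →ₗ[ℝ] ℝ) (b : V →ₗ[ℝ] V →ₗ[ℝ] ℝ)
    (ha_symm : ∀ u v : V, a u v = a v u)
    (ha_pos : ∀ v : V, v ≠ 0 → 0 < a v v)
    (hta_symm : ∀ u v : tV, ta u v = ta v u)
    (hta_pos : ∀ v : tV, v ≠ 0 → 0 < ta v v)
    (hb_symm : ∀ u v : V, b u v = b v u)
    (hb_nonneg : ∀ v : V, 0 ≤ b v v)
    (Q : tV →ₗ[ℝ] V) (tQ : V →ₗ[ℝ] tV)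
    (C₁ C₂ C₃ C₄ : ℝ) (hC₁ : 0 < C₁) (hC₂ : 0 < C₂) (hC₃ : 0 < C₃) (hC₄ : 0 < C₄)
    (h1 : ∀ tv : tV, a (Q tv) (Q tv) ≤ C₁ * ta tv tv)
    (h2 : ∀ v : V, ta (tQ v) (tQ v) ≤ C₂ * a v v)
    (h3 : ∀ v : V, b (v - Q (tQ v)) (v - Q (tQ v)) ≤ C₃ * a v v)
    (h4 : ∀ w : V, a w w ≤ C₄ * b w w) :
    ∀ v : V,
      (1 / (2 * max C₁ C₄)) * a v v ≤
          sInf {t : ℝ | ∃ w : V, ∃ tv : tV, v = w + Q tv ∧ t = b w w + ta tv tv} ∧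
        sInf {t : ℝ | ∃ w : V, ∃ tv : tV, v = w + Q tv ∧ t = b w w + ta tv tv} ≤
          (C₂ + C₃) * a v v := by

  intro v
  have ha_nonneg : ∀ u : V, 0 ≤ a u u := by
    intro u
    rcases eq_or_ne u 0 with h | h
    · simp [h]
    · exact (ha_pos u h).le
  have hta_nonneg : ∀ u : tV, 0 ≤ ta u u := by
    intro u
    rcases eq_or_ne u 0 with h | h
    · simp [h]
    · exact (hta_pos u h).le
  have hmem : (b (v - Q (tQ v)) (v - Q (tQ v)) + ta (tQ v) (tQ v)) ∈
      {t : ℝ | ∃ w : V, ∃ tv : tV, v = w + Q tv ∧ t = b w w + ta tv tv} :=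
    ⟨v - Q (tQ v), tQ v, by abel, rfl⟩
  have hne : {t : ℝ | ∃ w : V, ∃ tv : tV, v = w + Q tv ∧ t = b w w + ta tv tv}.Nonempty :=
    ⟨_, hmem⟩
  have hM : (0:ℝ) < max C₁ C₄ := lt_max_of_lt_left hC₁
  constructor
  · apply le_csInf hne
    rintro t ⟨w, tv, hv, rfl⟩
    have expand : a v v = a w w + a (Q tv) (Q tv) + 2 * a w (Q tv) := by
      rw [hv]; simp only [map_add, LinearMap.add_apply, ha_symm (Q tv) w]; ring
    have h2ab : 2 * a w (Q tv) ≤ a w w + a (Q tv) (Q tv) := by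
      have hnn := ha_nonneg (w - Q tv)
      have e : a (w - Q tv) (w - Q tv) = a w w + a (Q tv) (Q tv) - 2 * a w (Q tv) := by
        simp only [map_sub, LinearMap.sub_apply, ha_symm (Q tv) w]; ring
      linarith [e ▸ hnn]
    have h1' : a (Q tv) (Q tv) ≤ max C₁ C₄ * ta tv tv :=
      (h1 tv).trans (mul_le_mul_of_nonneg_right (le_max_left _ _) (hta_nonneg tv))
    have h4' : a w w ≤ max C₁ C₄ * b w w :=
      (h4 w).trans (mul_le_mul_of_nonneg_right (le_max_right _ _) (hb_nonneg w))
    rw [div_mul_eq_mul_div, one_mul, div_le_iff₀ (by positivity)]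
    nlinarith
  · calc sInf {t : ℝ | ∃ w : V, ∃ tv : tV, v = w + Q tv ∧ t = b w w + ta tv tv}
        ≤ b (v - Q (tQ v)) (v - Q (tQ v)) + ta (tQ v) (tQ v) := by
          apply csInf_le _ hmem
          refine ⟨0, ?_⟩
          rintro t ⟨w, tv, hv, rfl⟩
          exact add_nonneg (hb_nonneg w) (hta_nonneg tv)
      _ ≤ (C₂ + C₃) * a v v := by
          have := h3 v
          have := h2 v
          linarith
end

section
/- Let B be a symmetric positive definite n×n real matrix, Ã a symmetric positive definite m×m real matrix, and S an n×m real matrix. Then the matrix C := B⁻¹ + S Ã⁻¹ Sᵀ is symmetric positive definite, and for every v ∈ ℝⁿ, vᵀ C⁻¹ v = min { wᵀ B w + ṽᵀ Ã ṽ : w ∈ ℝⁿ, ṽ ∈ ℝᵐ, v = w + S ṽ }, the minimum being attained. -/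
open Matrix

private lemma dp_symm {k : ℕ} (A : Matrix (Fin k) (Fin k) ℝ) (hA : Aᵀ = A)
    (x y : Fin k → ℝ) : x ⬝ᵥ (A *ᵥ y) = (A *ᵥ x) ⬝ᵥ y := by
  rw [dotProduct_mulVec, ← mulVec_transpose, hA]

private lemma dp_trans {n m : ℕ} (S : Matrix (Fin n) (Fin m) ℝ)
    (x : Fin m → ℝ) (u : Fin n → ℝ) : x ⬝ᵥ (Sᵀ *ᵥ u) = (S *ᵥ x) ⬝ᵥ u := by
  rw [dotProduct_mulVec, ← mulVec_transpose, transpose_transpose]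

/-- Let `B` (n×n) and `tA` (m×m) be symmetric positive definite real matrices and `S` an
`n×m` real matrix.  Then `C := B⁻¹ + S tA⁻¹ Sᵀ` is symmetric positive definite and for
every `v ∈ ℝⁿ`, `vᵀ C⁻¹ v` is the (attained) minimum of `wᵀ B w + ṽᵀ tA ṽ` over all
decompositions `v = w + S ṽ`. -/
theorem aux_space_exact_inverse (n m : ℕ)
    (B : Matrix (Fin n) (Fin n) ℝ) (tA : Matrix (Fin m) (Fin m) ℝ)
    (S : Matrix (Fin n) (Fin m) ℝ)
    (hB : B.PosDef) (htA : tA.PosDef) :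
    (B⁻¹ + S * tA⁻¹ * Sᵀ).PosDef ∧
      ∀ v : Fin n → ℝ,
        IsLeast {t : ℝ | ∃ w : Fin n → ℝ, ∃ tv : Fin m → ℝ,
            v = w + S *ᵥ tv ∧ t = w ⬝ᵥ (B *ᵥ w) + tv ⬝ᵥ (tA *ᵥ tv)}
          (v ⬝ᵥ ((B⁻¹ + S * tA⁻¹ * Sᵀ)⁻¹ *ᵥ v)) := by
  have hsemi : (S * tA⁻¹ * Sᵀ).PosSemidef := by
    have h := htA.inv.posSemidef.mul_mul_conjTranspose_same S
    simpa using h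
  have hC : (B⁻¹ + S * tA⁻¹ * Sᵀ).PosDef := hB.inv.add_posSemidef hsemi
  refine ⟨hC, fun v => ?_⟩
  set C : Matrix (Fin n) (Fin n) ℝ := B⁻¹ + S * tA⁻¹ * Sᵀ with hCdef
  have hCmul : C * C⁻¹ = 1 := C.mul_nonsing_inv (isUnit_iff_ne_zero.mpr hC.det_pos.ne')
  have hBmul : B * B⁻¹ = 1 := B.mul_nonsing_inv (isUnit_iff_ne_zero.mpr hB.det_pos.ne')
  have hAmul : tA * tA⁻¹ = 1 := tA.mul_nonsing_inv (isUnit_iff_ne_zero.mpr htA.det_pos.ne')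
  have hBsymm : Bᵀ = B := by simpa using hB.isHermitian.eq
  have hAsymm : tAᵀ = tA := by simpa using htA.isHermitian.eq
  set u : Fin n → ℝ := C⁻¹ *ᵥ v with hu
  set w0 : Fin n → ℝ := B⁻¹ *ᵥ u with hw0
  set tv0 : Fin m → ℝ := tA⁻¹ *ᵥ (Sᵀ *ᵥ u) with htv0
  have hvu : C *ᵥ u = v := by
    rw [hu, mulVec_mulVec, hCmul, one_mulVec]
  have hBw0 : B *ᵥ w0 = u := by
    rw [hw0, mulVec_mulVec, hBmul, one_mulVec]
  have hAtv0 : tA *ᵥ tv0 = Sᵀ *ᵥ u := by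
    rw [htv0, mulVec_mulVec, hAmul, one_mulVec]
  have hdecomp : v = w0 + S *ᵥ tv0 := by
    rw [← hvu, hCdef, add_mulVec]
    simp [hw0, htv0, mulVec_mulVec, Matrix.mul_assoc]
  have hval : v ⬝ᵥ u = w0 ⬝ᵥ (B *ᵥ w0) + tv0 ⬝ᵥ (tA *ᵥ tv0) := by
    rw [hBw0, hAtv0, dp_trans, ← add_dotProduct, ← hdecomp]
  constructor
  · exact ⟨w0, tv0, hdecomp, hval⟩
  · rintro t ⟨w, tv, hv, ht⟩
    set dw : Fin n → ℝ := w - w0 with hdw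
    set dtv : Fin m → ℝ := tv - tv0 with hdtv
    have hzero : dw + S *ᵥ dtv = 0 := by
      have : w + S *ᵥ tv = w0 + S *ᵥ tv0 := by rw [← hv, ← hdecomp]
      calc dw + S *ᵥ dtv = (w + S *ᵥ tv) - (w0 + S *ᵥ tv0) := by
            rw [hdw, hdtv, mulVec_sub]; abel
        _ = 0 := by rw [this, sub_self]
    have hwsum : w = w0 + dw := by rw [hdw]; abel
    have htvsum : tv = tv0 + dtv := by rw [hdtv]; abel
    have e1 : w ⬝ᵥ (B *ᵥ w) =
        w0 ⬝ᵥ (B *ᵥ w0) + 2 * (u ⬝ᵥ dw) + dw ⬝ᵥ (B *ᵥ dw) := by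
      rw [hwsum, mulVec_add, dotProduct_add, add_dotProduct, add_dotProduct,
        dp_symm B hBsymm w0 dw, hBw0, dotProduct_comm dw u]
      ring
    have e2 : tv ⬝ᵥ (tA *ᵥ tv) =
        tv0 ⬝ᵥ (tA *ᵥ tv0) + 2 * (u ⬝ᵥ (S *ᵥ dtv)) + dtv ⬝ᵥ (tA *ᵥ dtv) := by
      rw [htvsum, mulVec_add, dotProduct_add, add_dotProduct, add_dotProduct,
        dp_symm tA hAsymm tv0 dtv, hAtv0,
        dotProduct_comm (Sᵀ *ᵥ u) dtv, dp_trans S dtv u, dotProduct_comm (S *ᵥ dtv) u]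
      ring
    have e3 : u ⬝ᵥ dw + u ⬝ᵥ (S *ᵥ dtv) = 0 := by
      rw [← dotProduct_add, hzero, dotProduct_zero]
    have p1 : 0 ≤ dw ⬝ᵥ (B *ᵥ dw) := by
      have := hB.posSemidef.dotProduct_mulVec_nonneg dw; simpa using this
    have p2 : 0 ≤ dtv ⬝ᵥ (tA *ᵥ dtv) := by
      have := htA.posSemidef.dotProduct_mulVec_nonneg dtv; simpa using this
    have : v ⬝ᵥ u ≤ t := by
      rw [ht, e1, e2, hval]
      linarith
    simpa [hu] using this
end

section
/- Auxiliary space preconditioner with exact solvers: Let A and B be symmetric positive definite n×n real matrices, Ã a symmetric positive definite m×m real matrix, and S an n×m real matrix. Assume there are constants 0 < c₀ ≤ c₁ such that for every v ∈ ℝⁿ, c₀ · vᵀ A v ≤ inf { wᵀ B w + ṽᵀ Ã ṽ : w ∈ ℝⁿ, ṽ ∈ ℝᵐ, v = w + S ṽ } ≤ c₁ · vᵀ A v. Then the matrix C := B⁻¹ + S Ã⁻¹ Sᵀ satisfies, for every v ∈ ℝⁿ, (1/c₁) · vᵀ A⁻¹ v ≤ vᵀ C v ≤ (1/c₀) ·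 vᵀ A⁻¹ v; in particular the spectral condition number of C A is at most c₁/c₀. -/
open Matrix

/-- For a symmetric matrix, the quadratic form argument can be swapped. -/
private lemma dot_symm {k : Type*} [Fintype k] (M : Matrix k k ℝ) (hM : Mᵀ = M)
    (x y : k → ℝ) : x ⬝ᵥ M *ᵥ y = y ⬝ᵥ M *ᵥ x := by
  rw [dotProduct_mulVec, ← mulVec_transpose, hM, dotProduct_comm]

/-- Expansion of the quadratic form of a difference, for a symmetric matrix. -/
private lemma expand_sub {k : Type*} [Fintype k] (M : Matrix k k ℝ) (hM : Mᵀ = M)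
    (x y : k → ℝ) :
    (x - y) ⬝ᵥ M *ᵥ (x - y) = x ⬝ᵥ M *ᵥ x - 2 * (x ⬝ᵥ M *ᵥ y) + y ⬝ᵥ M *ᵥ y := by
  rw [mulVec_sub, sub_dotProduct, dotProduct_sub, dotProduct_sub, dot_symm M hM y x]
  ring

private lemma posdef_transpose {k : Type*} [Fintype k] {M : Matrix k k ℝ} (hM : M.PosDef) :
    Mᵀ = M := by
  have := hM.1
  exact (by simpa using this : M.IsSymm).eq

/-- Variational bound: `2⟨u,v⟩ - ⟨u, Pu⟩ ≤ ⟨v, P⁻¹v⟩` for positive definite `P`. -/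
private lemma var_bound {k : Type*} [Fintype k] [DecidableEq k] {P : Matrix k k ℝ}
    (hP : P.PosDef) (u v : k → ℝ) :
    2 * (u ⬝ᵥ v) - u ⬝ᵥ P *ᵥ u ≤ v ⬝ᵥ P⁻¹ *ᵥ v := by
  have hPt : Pᵀ = P := posdef_transpose hP
  have hunit : IsUnit P.det := isUnit_iff_ne_zero.2 hP.det_pos.ne'
  have hPinv : P *ᵥ (P⁻¹ *ᵥ v) = v := by
    rw [mulVec_mulVec, mul_nonsing_inv P hunit, one_mulVec]
  have h0 : 0 ≤ (u - P⁻¹ *ᵥ v) ⬝ᵥ P *ᵥ (u - P⁻¹ *ᵥ v) := by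
    simpa using hP.posSemidef.dotProduct_mulVec_nonneg (u - P⁻¹ *ᵥ v)
  rw [expand_sub P hPt] at h0
  rw [hPinv] at h0
  have hyy : P⁻¹ *ᵥ v ⬝ᵥ v = v ⬝ᵥ P⁻¹ *ᵥ v := dotProduct_comm _ _
  rw [hyy] at h0
  linarith

/-- If `⟨x,Px⟩ ≤ c⟨x,Qx⟩` for positive definite `P, Q`, then
`(1/c)⟨v,Q⁻¹v⟩ ≤ ⟨v,P⁻¹v⟩`. -/
private lemma inv_comp {k : Type*} [Fintype k] [DecidableEq k] {P Q : Matrix k k ℝ}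
    (hP : P.PosDef) (hQ : Q.PosDef) (c : ℝ) (hcpos : 0 < c)
    (h : ∀ x, x ⬝ᵥ P *ᵥ x ≤ c * (x ⬝ᵥ Q *ᵥ x)) :
    ∀ v, (1 / c) * (v ⬝ᵥ Q⁻¹ *ᵥ v) ≤ v ⬝ᵥ P⁻¹ *ᵥ v := by
  intro v
  have hQunit : IsUnit Q.det := isUnit_iff_ne_zero.2 hQ.det_pos.ne'
  set z := Q⁻¹ *ᵥ v with hzdef
  have hq : Q *ᵥ z = v := by
    rw [hzdef, mulVec_mulVec, mul_nonsing_inv Q hQunit, one_mulVec]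
  set u := (1 / c) • z with hudef
  have h1 := var_bound hP u v
  have h2 := h u
  have e1 : u ⬝ᵥ Q *ᵥ u = (1 / c) * ((1 / c) * (z ⬝ᵥ v)) := by
    rw [hudef, mulVec_smul, smul_dotProduct, dotProduct_smul, smul_eq_mul, smul_eq_mul, hq]
  have e2 : u ⬝ᵥ v = (1 / c) * (z ⬝ᵥ v) := by
    rw [hudef, smul_dotProduct, smul_eq_mul]
  have e3 : v ⬝ᵥ Q⁻¹ *ᵥ v = z ⬝ᵥ v := by
    rw [← hzdef, dotProduct_comm]
  have e4 : c * ((1 / c) * ((1 / c) * (z ⬝ᵥ v))) = (1 / c) * (z ⬝ᵥ v) := by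
    field_simp
  rw [e1, e4] at h2
  rw [e2] at h1
  rw [e3]
  linarith

/-- **Auxiliary space preconditioner with exact solvers.**  Let `A`, `B` be symmetric
positive definite `n×n` matrices, `tA` a symmetric positive definite `m×m` matrix and `S`
an `n×m` matrix.  If the quadratic form of `A` is equivalent (constants `c₀ ≤ c₁`) to the
infimum of `wᵀBw + ṽᵀtAṽ` over decompositions `v = w + Sṽ`, then
`C := B⁻¹ + S tA⁻¹ Sᵀ` satisfies `(1/c₁) vᵀA⁻¹v ≤ vᵀCv ≤ (1/c₀) vᵀA⁻¹v`; in particular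
any two (real) eigenvalues `μ, ν` of `C * A` satisfy `μ ≤ (c₁/c₀) ν`, i.e. the spectral
condition number of `C * A` is at most `c₁/c₀`. -/
theorem aux_space_exact_precond (n m : ℕ)
    (A B : Matrix (Fin n) (Fin n) ℝ) (tA : Matrix (Fin m) (Fin m) ℝ)
    (S : Matrix (Fin n) (Fin m) ℝ)
    (hA : A.PosDef) (hB : B.PosDef) (htA : tA.PosDef)
    (c₀ c₁ : ℝ) (hc₀ : 0 < c₀) (hc : c₀ ≤ c₁)
    (h : ∀ v : Fin n → ℝ,
      c₀ * (v ⬝ᵥ (A *ᵥ v)) ≤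
          sInf {t : ℝ | ∃ w : Fin n → ℝ, ∃ tv : Fin m → ℝ,
            v = w + S *ᵥ tv ∧ t = w ⬝ᵥ (B *ᵥ w) + tv ⬝ᵥ (tA *ᵥ tv)} ∧
        sInf {t : ℝ | ∃ w : Fin n → ℝ, ∃ tv : Fin m → ℝ,
            v = w + S *ᵥ tv ∧ t = w ⬝ᵥ (B *ᵥ w) + tv ⬝ᵥ (tA *ᵥ tv)} ≤
          c₁ * (v ⬝ᵥ (A *ᵥ v))) :
    (∀ v : Fin n → ℝ,
        (1 / c₁) * (v ⬝ᵥ (A⁻¹ *ᵥ v)) ≤ v ⬝ᵥ ((B⁻¹ + S * tA⁻¹ * Sᵀ) *ᵥ v) ∧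
          v ⬝ᵥ ((B⁻¹ + S * tA⁻¹ * Sᵀ) *ᵥ v) ≤ (1 / c₀) * (v ⬝ᵥ (A⁻¹ *ᵥ v))) ∧
      ∀ μ ν : ℝ,
        Module.End.HasEigenvalue (Matrix.toLin' ((B⁻¹ + S * tA⁻¹ * Sᵀ) * A)) μ →
        Module.End.HasEigenvalue (Matrix.toLin' ((B⁻¹ + S * tA⁻¹ * Sᵀ) * A)) ν →
        μ ≤ (c₁ / c₀) * ν := by
  have hc₁ : (0:ℝ) < c₁ := lt_of_lt_of_le hc₀ hc
  set C : Matrix (Fin n) (Fin n) ℝ := B⁻¹ + S * tA⁻¹ * Sᵀ with hCdef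
  -- C is positive definite
  have hSt : Sᴴ = Sᵀ := by ext i j; simp [conjTranspose_apply]
  have hC : C.PosDef := by
    have h1 : (S * tA⁻¹ * Sᵀ).PosSemidef := by
      have := htA.inv.posSemidef.mul_mul_conjTranspose_same S
      rwa [hSt] at this
    exact hB.inv.add_posSemidef h1
  have hBt : Bᵀ = B := posdef_transpose hB
  have htAt : tAᵀ = tA := posdef_transpose htA
  have hAunit : IsUnit A.det := isUnit_iff_ne_zero.2 hA.det_pos.ne'
  have hBunit : IsUnit B.det := isUnit_iff_ne_zero.2 hB.det_pos.ne'
  have htAunit : IsUnit tA.det := isUnit_iff_ne_zero.2 htA.det_pos.ne'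
  have hCunit : IsUnit C.det := isUnit_iff_ne_zero.2 hC.det_pos.ne'
  -- The key identity : the infimum equals v ⬝ᵥ C⁻¹ v
  have key : ∀ v : Fin n → ℝ,
      sInf {t : ℝ | ∃ w : Fin n → ℝ, ∃ tv : Fin m → ℝ,
        v = w + S *ᵥ tv ∧ t = w ⬝ᵥ (B *ᵥ w) + tv ⬝ᵥ (tA *ᵥ tv)} = v ⬝ᵥ C⁻¹ *ᵥ v := by
    intro v
    obtain ⟨z, hzdef⟩ : ∃ z, z = C⁻¹ *ᵥ v := ⟨_, rfl⟩
    have hCz : C *ᵥ z = v := by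
      rw [hzdef, mulVec_mulVec, mul_nonsing_inv C hCunit, one_mulVec]
    obtain ⟨w₀, hw₀⟩ : ∃ w₀, w₀ = B⁻¹ *ᵥ z := ⟨_, rfl⟩
    obtain ⟨tv₀, htv₀⟩ : ∃ tv₀, tv₀ = tA⁻¹ *ᵥ (Sᵀ *ᵥ z) := ⟨_, rfl⟩
    have f1 : B *ᵥ w₀ = z := by
      rw [hw₀, mulVec_mulVec, mul_nonsing_inv B hBunit, one_mulVec]
    have f2 : tA *ᵥ tv₀ = Sᵀ *ᵥ z := by
      rw [htv₀, mulVec_mulVec, mul_nonsing_inv tA htAunit, one_mulVec]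
    have f3 : w₀ + S *ᵥ tv₀ = v := by
      rw [hw₀, htv₀, mulVec_mulVec, mulVec_mulVec, ← add_mulVec, ← hCdef, hCz]
    -- dot products with z
    have dS : ∀ tv : Fin m → ℝ, tv ⬝ᵥ Sᵀ *ᵥ z = (S *ᵥ tv) ⬝ᵥ z := by
      intro tv
      rw [dotProduct_mulVec, vecMul_transpose]
    have dv : v ⬝ᵥ C⁻¹ *ᵥ v = v ⬝ᵥ z := by rw [hzdef]
    -- lower bound
    have lb : ∀ t ∈ {t : ℝ | ∃ w : Fin n → ℝ, ∃ tv : Fin m → ℝ,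
        v = w + S *ᵥ tv ∧ t = w ⬝ᵥ (B *ᵥ w) + tv ⬝ᵥ (tA *ᵥ tv)},
        v ⬝ᵥ C⁻¹ *ᵥ v ≤ t := by
      rintro t ⟨w, tv, hvw, rfl⟩
      have e₁ := expand_sub B hBt w w₀
      have e₂ := expand_sub tA htAt tv tv₀
      rw [f1] at e₁
      rw [f2, dS tv, dS tv₀] at e₂
      have p₁ : 0 ≤ (w - w₀) ⬝ᵥ B *ᵥ (w - w₀) := by simpa using hB.posSemidef.dotProduct_mulVec_nonneg (w - w₀)
      have p₂ : 0 ≤ (tv - tv₀) ⬝ᵥ tA *ᵥ (tv - tv₀) := by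
        simpa using htA.posSemidef.dotProduct_mulVec_nonneg (tv - tv₀)
      have q₁ : w ⬝ᵥ z + (S *ᵥ tv) ⬝ᵥ z = v ⬝ᵥ z := by
        rw [hvw, add_dotProduct]
      have q₂ : w₀ ⬝ᵥ z + (S *ᵥ tv₀) ⬝ᵥ z = v ⬝ᵥ z := by
        rw [← f3, add_dotProduct]
      have r₀ : w₀ ⬝ᵥ B *ᵥ w₀ = w₀ ⬝ᵥ z := by rw [f1]
      have r₁ : tv₀ ⬝ᵥ tA *ᵥ tv₀ = (S *ᵥ tv₀) ⬝ᵥ z := by rw [f2, dS tv₀]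
      rw [dv]
      linarith
    -- the infimum is attained at (w₀, tv₀)
    have mem : v ⬝ᵥ C⁻¹ *ᵥ v ∈ {t : ℝ | ∃ w : Fin n → ℝ, ∃ tv : Fin m → ℝ,
        v = w + S *ᵥ tv ∧ t = w ⬝ᵥ (B *ᵥ w) + tv ⬝ᵥ (tA *ᵥ tv)} := by
      refine ⟨w₀, tv₀, f3.symm, ?_⟩
      have r₀ : w₀ ⬝ᵥ B *ᵥ w₀ = w₀ ⬝ᵥ z := by rw [f1]
      have r₁ : tv₀ ⬝ᵥ tA *ᵥ tv₀ = (S *ᵥ tv₀) ⬝ᵥ z := by rw [f2, dS tv₀]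
      have q₂ : w₀ ⬝ᵥ z + (S *ᵥ tv₀) ⬝ᵥ z = v ⬝ᵥ z := by
        rw [← f3, add_dotProduct]
      rw [dv, r₀, r₁, ← q₂]
    exact le_antisymm (csInf_le ⟨v ⬝ᵥ C⁻¹ *ᵥ v, lb⟩ mem) (le_csInf ⟨_, mem⟩ lb)
  -- quadratic form bounds on C⁻¹
  have hbounds : ∀ v : Fin n → ℝ,
      c₀ * (v ⬝ᵥ A *ᵥ v) ≤ v ⬝ᵥ C⁻¹ *ᵥ v ∧ v ⬝ᵥ C⁻¹ *ᵥ v ≤ c₁ * (v ⬝ᵥ A *ᵥ v) := by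
    intro v
    have := h v
    rw [key v] at this
    exact this
  -- main quadratic form bounds on C
  have hCC : (C⁻¹)⁻¹ = C := nonsing_inv_nonsing_inv C hCunit
  have main : ∀ v : Fin n → ℝ,
      (1 / c₁) * (v ⬝ᵥ A⁻¹ *ᵥ v) ≤ v ⬝ᵥ C *ᵥ v ∧
        v ⬝ᵥ C *ᵥ v ≤ (1 / c₀) * (v ⬝ᵥ A⁻¹ *ᵥ v) := by
    intro v
    constructor
    · have := inv_comp hC.inv hA c₁ hc₁ (fun x => (hbounds x).2) v
      rwa [hCC] at this
    · have h' : ∀ x : Fin n → ℝ, x ⬝ᵥ A *ᵥ x ≤ (1 / c₀) * (x ⬝ᵥ C⁻¹ *ᵥ x) := by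
        intro x
        have := (hbounds x).1
        rw [div_mul_eq_mul_div, le_div_iff₀ hc₀]
        linarith
      have := inv_comp hA hC.inv (1 / c₀) (by positivity) h' v
      rw [hCC, one_div_one_div] at this
      rw [div_mul_eq_mul_div, le_div_iff₀ hc₀]
      linarith
  refine ⟨main, ?_⟩
  -- eigenvalue bound
  have eig : ∀ μ : ℝ, Module.End.HasEigenvalue (Matrix.toLin' (C * A)) μ →
      1 / c₁ ≤ μ ∧ μ ≤ 1 / c₀ := by
    intro μ hμ
    obtain ⟨x, hx⟩ := hμ.exists_hasEigenvector
    have hx2 : x ≠ 0 := hx.right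
    have hx1' : (C * A) *ᵥ x = μ • x := by
      have := hx.apply_eq_smul
      rwa [Matrix.toLin'_apply] at this
    obtain ⟨y, hy⟩ : ∃ y, y = A *ᵥ x := ⟨_, rfl⟩
    have hCy : C *ᵥ y = μ • x := by rw [hy, mulVec_mulVec, hx1']
    have hyx : y ⬝ᵥ x = x ⬝ᵥ A *ᵥ x := by rw [hy, dotProduct_comm]
    have h1 : y ⬝ᵥ C *ᵥ y = μ * (x ⬝ᵥ A *ᵥ x) := by
      rw [hCy, dotProduct_smul, smul_eq_mul, hyx]
    have hinv : A⁻¹ *ᵥ y = x := by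
      rw [hy, mulVec_mulVec, nonsing_inv_mul A hAunit, one_mulVec]
    have h2 : y ⬝ᵥ A⁻¹ *ᵥ y = x ⬝ᵥ A *ᵥ x := by rw [hinv, hyx]
    have hxAx : 0 < x ⬝ᵥ A *ᵥ x := by simpa using hA.dotProduct_mulVec_pos hx2
    obtain ⟨hlo, hhi⟩ := main y
    rw [h1, h2] at hlo hhi
    constructor
    · exact le_of_mul_le_mul_right (by linarith) hxAx
    · exact le_of_mul_le_mul_right (by linarith) hxAx
  intro μ ν hμ hν
  obtain ⟨_, hμ2⟩ := eig μ hμ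
  obtain ⟨hν1, _⟩ := eig ν hν
  have hd : (0:ℝ) < c₁ / c₀ := by positivity
  have e : (c₁ / c₀) * (1 / c₁) = 1 / c₀ := by
    field_simp
  have : (c₁ / c₀) * (1 / c₁) ≤ (c₁ / c₀) * ν := by
    exact mul_le_mul_of_nonneg_left hν1 hd.le
  linarith
end

section
/- Auxiliary Space Method theorem: Let A and B be symmetric positive definite n×n real matrices, Ã a symmetric positive definite m×m real matrix, and S an n×m real matrix, and assume there are constants 0 < c₀ ≤ c₁ such that for every v ∈ ℝⁿ, c₀ · vᵀ A v ≤ inf { wᵀ B w + ṽᵀ Ã ṽ : v = w + S ṽ } ≤ c₁ · vᵀ A v. Let C_B be a symmetric positive definite n×n matrix with b₀ · wᵀ B⁻¹ w ≤ wᵀ C_B w ≤ b₁ · wᵀ B⁻¹ w for all w ∈ ℝⁿ, and C_Ã a symmetric positive definite m×m matrix with g₀ · ṽᵀ Ã⁻¹ ṽ ≤ ṽᵀ C_Ã ṽ ≤ g₁ · ṽᵀ Ã⁻¹ ṽ for all ṽ ∈ ℝᵐ, where 0 < b₀ ≤ b₁ and 0 < g₀ ≤ g₁. Then C_A := C_B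 + S C_Ã Sᵀ is symmetric positive definite and satisfies, for all v ∈ ℝⁿ, (min(b₀, g₀)/c₁) · vᵀ A⁻¹ v ≤ vᵀ C_A v ≤ (max(b₁, g₁)/c₀) · vᵀ A⁻¹ v; in particular the spectral condition number of C_A A is at most (c₁/c₀) · max(b₁, g₁)/min(b₀, g₀). -/
open Matrix


lemma dp_pos {k : ℕ} {P : Matrix (Fin k) (Fin k) ℝ} (hP : P.PosDef) {x : Fin k → ℝ}
    (hx : x ≠ 0) : 0 < x ⬝ᵥ (P *ᵥ x) := by simpa using hP.dotProduct_mulVec_pos hx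

lemma dp_nonneg {k : ℕ} {P : Matrix (Fin k) (Fin k) ℝ} (hP : P.PosDef) (x : Fin k → ℝ) :
    0 ≤ x ⬝ᵥ (P *ᵥ x) := by simpa using hP.posSemidef.dotProduct_mulVec_nonneg x

lemma det_unit {k : ℕ} {P : Matrix (Fin k) (Fin k) ℝ} (hP : P.PosDef) : IsUnit P.det :=
  (hP.det_pos.ne').isUnit

lemma herm_transpose {k : ℕ} {P : Matrix (Fin k) (Fin k) ℝ} (hP : P.IsHermitian) :
    Pᵀ = P := by
  rw [← Matrix.conjTranspose_eq_transpose_of_trivial]; exact hP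

lemma dp_symm_s6 {k : ℕ} {P : Matrix (Fin k) (Fin k) ℝ} (hP : Pᵀ = P)
    (a b : Fin k → ℝ) : a ⬝ᵥ (P *ᵥ b) = b ⬝ᵥ (P *ᵥ a) := by
  rw [dotProduct_mulVec, ← mulVec_transpose, hP, dotProduct_comm]

lemma legendre {k : ℕ} {P : Matrix (Fin k) (Fin k) ℝ} (hP : P.PosDef)
    (t x : Fin k → ℝ) : 2 * (t ⬝ᵥ x) - t ⬝ᵥ (P *ᵥ t) ≤ x ⬝ᵥ (P⁻¹ *ᵥ x) := by
  set u : Fin k → ℝ := P⁻¹ *ᵥ x with hu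
  have hPu : P *ᵥ u = x := by
    rw [hu, mulVec_mulVec, Matrix.mul_nonsing_inv _ (det_unit hP), one_mulVec]
  have h0 : 0 ≤ (t - u) ⬝ᵥ (P *ᵥ (t - u)) := dp_nonneg hP _
  have h1 : u ⬝ᵥ (P *ᵥ t) = t ⬝ᵥ x := by
    rw [dp_symm_s6 (herm_transpose hP.1) u t, hPu]
  have h2 : t ⬝ᵥ (P *ᵥ u) = t ⬝ᵥ x := by rw [hPu]
  have h3 : u ⬝ᵥ (P *ᵥ u) = x ⬝ᵥ (P⁻¹ *ᵥ x) := by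
    rw [hPu, hu, dotProduct_comm]
  have hexp : (t - u) ⬝ᵥ (P *ᵥ (t - u))
      = t ⬝ᵥ (P *ᵥ t) - 2 * (t ⬝ᵥ x) + x ⬝ᵥ (P⁻¹ *ᵥ x) := by
    rw [mulVec_sub, dotProduct_sub, sub_dotProduct, sub_dotProduct]
    linarith
  linarith [hexp ▸ h0]

lemma loewner_inv {k : ℕ} {P Q : Matrix (Fin k) (Fin k) ℝ} (hP : P.PosDef) (hQ : Q.PosDef)
    (c : ℝ) (hc : 0 < c) (hle : ∀ x, c * (x ⬝ᵥ (P *ᵥ x)) ≤ x ⬝ᵥ (Q *ᵥ x)) :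
    ∀ x, c * (x ⬝ᵥ (Q⁻¹ *ᵥ x)) ≤ x ⬝ᵥ (P⁻¹ *ᵥ x) := by
  intro x
  set t : Fin k → ℝ := Q⁻¹ *ᵥ x with ht
  have hQt : Q *ᵥ t = x := by
    rw [ht, mulVec_mulVec, Matrix.mul_nonsing_inv _ (det_unit hQ), one_mulVec]
  have h1 : x ⬝ᵥ (Q⁻¹ *ᵥ x) = t ⬝ᵥ x := by rw [← ht, dotProduct_comm]
  have h2 : t ⬝ᵥ (Q *ᵥ t) = t ⬝ᵥ x := by rw [hQt]
  have hleg := legendre hP (c • t) x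
  have hst : (c • t) ⬝ᵥ x = c * (t ⬝ᵥ x) := by rw [smul_dotProduct, smul_eq_mul]
  have hst2 : (c • t) ⬝ᵥ (P *ᵥ (c • t)) = c * c * (t ⬝ᵥ (P *ᵥ t)) := by
    rw [smul_dotProduct, mulVec_smul, dotProduct_smul, smul_eq_mul, smul_eq_mul]; ring
  have hP2 := hle t
  rw [hst, hst2] at hleg
  nlinarith [hleg, hP2, h1, h2]

lemma sandwich_quad {k l : ℕ} (S : Matrix (Fin k) (Fin l) ℝ) (M : Matrix (Fin l) (Fin l) ℝ)
    (v : Fin k → ℝ) :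
    v ⬝ᵥ ((S * M * Sᵀ) *ᵥ v) = (Sᵀ *ᵥ v) ⬝ᵥ (M *ᵥ (Sᵀ *ᵥ v)) := by
  rw [← mulVec_mulVec, ← mulVec_mulVec, dotProduct_mulVec, ← mulVec_transpose,
    dotProduct_mulVec, ← mulVec_transpose]

lemma sandwich_psd {k l : ℕ} (S : Matrix (Fin k) (Fin l) ℝ) {M : Matrix (Fin l) (Fin l) ℝ}
    (hM : M.PosSemidef) : (S * M * Sᵀ).PosSemidef := by
  have := hM.mul_mul_conjTranspose_same S
  simpa using this

lemma mulvec_dot {k l : ℕ} (S : Matrix (Fin k) (Fin l) ℝ) (tv : Fin l → ℝ) (u : Fin k → ℝ) :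
    (S *ᵥ tv) ⬝ᵥ u = tv ⬝ᵥ (Sᵀ *ᵥ u) := by
  rw [dotProduct_comm, dotProduct_mulVec, ← mulVec_transpose, dotProduct_comm, dotProduct_comm]

/-- **Auxiliary Space Method theorem.**  Let `A`, `B` be symmetric positive definite
`n×n` matrices, `tA` a symmetric positive definite `m×m` matrix and `S` an `n×m` matrix,
with the stable-splitting equivalence (constants `c₀ ≤ c₁`).  Let `CB` and `CtA` be
symmetric positive definite preconditioners spectrally equivalent to `B⁻¹` (constants
`b₀ ≤ b₁`) resp. `tA⁻¹` (constants `g₀ ≤ g₁`).  Then `C_A := CB + S CtA Sᵀ` is symmetric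
positive definite, spectrally equivalent to `A⁻¹` with constants `min(b₀,g₀)/c₁` and
`max(b₁,g₁)/c₀`; in particular any two eigenvalues `μ, ν` of `C_A * A` satisfy
`μ ≤ (c₁/c₀)·(max(b₁,g₁)/min(b₀,g₀))·ν`, i.e. the spectral condition number of
`C_A * A` is at most `(c₁/c₀)·max(b₁,g₁)/min(b₀,g₀)`. -/
theorem auxiliary_space_method (n m : ℕ)
    (A B : Matrix (Fin n) (Fin n) ℝ) (tA : Matrix (Fin m) (Fin m) ℝ)
    (S : Matrix (Fin n) (Fin m) ℝ)
    (hA : A.PosDef) (hB : B.PosDef) (htA : tA.PosDef)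
    (c₀ c₁ : ℝ) (hc₀ : 0 < c₀) (hc : c₀ ≤ c₁)
    (h : ∀ v : Fin n → ℝ,
      c₀ * (v ⬝ᵥ (A *ᵥ v)) ≤
          sInf {t : ℝ | ∃ w : Fin n → ℝ, ∃ tv : Fin m → ℝ,
            v = w + S *ᵥ tv ∧ t = w ⬝ᵥ (B *ᵥ w) + tv ⬝ᵥ (tA *ᵥ tv)} ∧
        sInf {t : ℝ | ∃ w : Fin n → ℝ, ∃ tv : Fin m → ℝ,
            v = w + S *ᵥ tv ∧ t = w ⬝ᵥ (B *ᵥ w) + tv ⬝ᵥ (tA *ᵥ tv)} ≤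
          c₁ * (v ⬝ᵥ (A *ᵥ v)))
    (CB : Matrix (Fin n) (Fin n) ℝ) (hCB : CB.PosDef)
    (CtA : Matrix (Fin m) (Fin m) ℝ) (hCtA : CtA.PosDef)
    (b₀ b₁ g₀ g₁ : ℝ) (hb₀ : 0 < b₀) (hb : b₀ ≤ b₁) (hg₀ : 0 < g₀) (hg : g₀ ≤ g₁)
    (hCBspec : ∀ w : Fin n → ℝ,
      b₀ * (w ⬝ᵥ (B⁻¹ *ᵥ w)) ≤ w ⬝ᵥ (CB *ᵥ w) ∧
        w ⬝ᵥ (CB *ᵥ w) ≤ b₁ * (w ⬝ᵥ (B⁻¹ *ᵥ w)))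
    (hCtAspec : ∀ tv : Fin m → ℝ,
      g₀ * (tv ⬝ᵥ (tA⁻¹ *ᵥ tv)) ≤ tv ⬝ᵥ (CtA *ᵥ tv) ∧
        tv ⬝ᵥ (CtA *ᵥ tv) ≤ g₁ * (tv ⬝ᵥ (tA⁻¹ *ᵥ tv))) :
    (CB + S * CtA * Sᵀ).PosDef ∧
      (∀ v : Fin n → ℝ,
        (min b₀ g₀ / c₁) * (v ⬝ᵥ (A⁻¹ *ᵥ v)) ≤ v ⬝ᵥ ((CB + S * CtA * Sᵀ) *ᵥ v) ∧
          v ⬝ᵥ ((CB + S * CtA * Sᵀ) *ᵥ v) ≤ (max b₁ g₁ / c₀) * (v ⬝ᵥ (A⁻¹ *ᵥ v))) ∧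
      ∀ μ ν : ℝ,
        Module.End.HasEigenvalue (Matrix.toLin' ((CB + S * CtA * Sᵀ) * A)) μ →
        Module.End.HasEigenvalue (Matrix.toLin' ((CB + S * CtA * Sᵀ) * A)) ν →
        μ ≤ (c₁ / c₀) * (max b₁ g₁ / min b₀ g₀) * ν := by
  have hc₁ : 0 < c₁ := lt_of_lt_of_le hc₀ hc
  set N : Matrix (Fin n) (Fin n) ℝ := B⁻¹ + S * tA⁻¹ * Sᵀ with hNdef
  have hNpsd : (S * tA⁻¹ * Sᵀ).PosSemidef := sandwich_psd S htA.inv.posSemidef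
  have hN : N.PosDef := hB.inv.add_posSemidef hNpsd
  have quadN : ∀ v : Fin n → ℝ,
      v ⬝ᵥ (N *ᵥ v) = v ⬝ᵥ (B⁻¹ *ᵥ v) + (Sᵀ *ᵥ v) ⬝ᵥ (tA⁻¹ *ᵥ (Sᵀ *ᵥ v)) := by
    intro v
    rw [hNdef, add_mulVec, dotProduct_add, sandwich_quad]
  -- sInf equals v ⬝ᵥ N⁻¹ v : obtain the two inequalities relating N⁻¹ and A
  have hNinvA : ∀ v : Fin n → ℝ,
      c₀ * (v ⬝ᵥ (A *ᵥ v)) ≤ v ⬝ᵥ (N⁻¹ *ᵥ v) ∧ v ⬝ᵥ (N⁻¹ *ᵥ v) ≤ c₁ * (v ⬝ᵥ (A *ᵥ v)) := by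
    intro v
    obtain ⟨u, hu⟩ : ∃ u : Fin n → ℝ, u = N⁻¹ *ᵥ v := ⟨_, rfl⟩
    have hNu : N *ᵥ u = v := by
      rw [hu, mulVec_mulVec, Matrix.mul_nonsing_inv _ (det_unit hN), one_mulVec]
    have hval : v ⬝ᵥ (N⁻¹ *ᵥ v) = u ⬝ᵥ v := by rw [hu, dotProduct_comm]
    set Tset : Set ℝ := {t : ℝ | ∃ w : Fin n → ℝ, ∃ tv : Fin m → ℝ,
        v = w + S *ᵥ tv ∧ t = w ⬝ᵥ (B *ᵥ w) + tv ⬝ᵥ (tA *ᵥ tv)} with hT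
    -- membership of the optimal splitting
    have hmem : v ⬝ᵥ (N⁻¹ *ᵥ v) ∈ Tset := by
      refine ⟨B⁻¹ *ᵥ u, tA⁻¹ *ᵥ (Sᵀ *ᵥ u), ?_, ?_⟩
      · rw [mulVec_mulVec, mulVec_mulVec, ← add_mulVec, ← hNdef, hNu]
      · have e1 : B *ᵥ (B⁻¹ *ᵥ u) = u := by
          rw [mulVec_mulVec, Matrix.mul_nonsing_inv _ (det_unit hB), one_mulVec]
        have e2 : tA *ᵥ (tA⁻¹ *ᵥ (Sᵀ *ᵥ u)) = Sᵀ *ᵥ u := by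
          rw [mulVec_mulVec, Matrix.mul_nonsing_inv _ (det_unit htA), one_mulVec]
        rw [e1, e2, hval]
        have e3 : (B⁻¹ *ᵥ u) ⬝ᵥ u = u ⬝ᵥ (B⁻¹ *ᵥ u) := dotProduct_comm _ _
        have e4 : (tA⁻¹ *ᵥ (Sᵀ *ᵥ u)) ⬝ᵥ (Sᵀ *ᵥ u) = (Sᵀ *ᵥ u) ⬝ᵥ (tA⁻¹ *ᵥ (Sᵀ *ᵥ u)) :=
          dotProduct_comm _ _
        have e5 : u ⬝ᵥ v = u ⬝ᵥ (N *ᵥ u) := by rw [hNu]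
        rw [e3, e4, e5, quadN u]
    -- lower bound over all splittings
    have hlb : ∀ t ∈ Tset, v ⬝ᵥ (N⁻¹ *ᵥ v) ≤ t := by
      rintro t ⟨w, tv, hsplit, rfl⟩
      have l1 := legendre hB w u
      have l2 := legendre htA tv (Sᵀ *ᵥ u)
      have e6 : w ⬝ᵥ u + tv ⬝ᵥ (Sᵀ *ᵥ u) = v ⬝ᵥ u := by
        rw [hsplit, add_dotProduct, mulvec_dot]
      have e7 : u ⬝ᵥ (B⁻¹ *ᵥ u) + (Sᵀ *ᵥ u) ⬝ᵥ (tA⁻¹ *ᵥ (Sᵀ *ᵥ u)) = v ⬝ᵥ (N⁻¹ *ᵥ v) := by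
        rw [← quadN u, hNu, hval, dotProduct_comm]
      have e8 : v ⬝ᵥ u = v ⬝ᵥ (N⁻¹ *ᵥ v) := by rw [hval, dotProduct_comm]
      linarith
    have hbdd : BddBelow Tset := ⟨v ⬝ᵥ (N⁻¹ *ᵥ v), fun t ht => hlb t ht⟩
    have hne : Tset.Nonempty := ⟨_, hmem⟩
    have hs1 : sInf Tset ≤ v ⬝ᵥ (N⁻¹ *ᵥ v) := csInf_le hbdd hmem
    have hs2 : v ⬝ᵥ (N⁻¹ *ᵥ v) ≤ sInf Tset := le_csInf hne hlb
    obtain ⟨ha1, ha2⟩ := h v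
    exact ⟨le_trans ha1 hs1, le_trans hs2 ha2⟩
  -- invert the spectral equivalence
  have hlow : ∀ x : Fin n → ℝ, c₀ * (x ⬝ᵥ (N *ᵥ x)) ≤ x ⬝ᵥ (A⁻¹ *ᵥ x) := by
    have := loewner_inv hA hN.inv c₀ hc₀ (fun v => (hNinvA v).1)
    intro x
    have hNN : N⁻¹⁻¹ = N := Matrix.nonsing_inv_nonsing_inv _ (det_unit hN)
    have := this x
    rwa [hNN] at this
  have hhigh : ∀ x : Fin n → ℝ, (1 / c₁) * (x ⬝ᵥ (A⁻¹ *ᵥ x)) ≤ x ⬝ᵥ (N *ᵥ x) := by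
    have hstep : ∀ v : Fin n → ℝ, (1 / c₁) * (v ⬝ᵥ (N⁻¹ *ᵥ v)) ≤ v ⬝ᵥ (A *ᵥ v) := by
      intro v
      have := (hNinvA v).2
      rw [div_mul_eq_mul_div, div_le_iff₀ hc₁]
      linarith
    have := loewner_inv hN.inv hA (1 / c₁) (by positivity) hstep
    intro x
    have hNN : N⁻¹⁻¹ = N := Matrix.nonsing_inv_nonsing_inv _ (det_unit hN)
    have := this x
    rwa [hNN] at this
  -- quadratic form of the preconditioner
  have quadC : ∀ v : Fin n → ℝ,
      v ⬝ᵥ ((CB + S * CtA * Sᵀ) *ᵥ v)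
        = v ⬝ᵥ (CB *ᵥ v) + (Sᵀ *ᵥ v) ⬝ᵥ (CtA *ᵥ (Sᵀ *ᵥ v)) := by
    intro v
    rw [add_mulVec, dotProduct_add, sandwich_quad]
  have hmin : 0 < min b₀ g₀ := lt_min hb₀ hg₀
  have hmax : 0 < max b₁ g₁ := lt_of_lt_of_le hb₀ (le_trans hb (le_max_left _ _))
  -- the spectral equivalence for C_A
  have hspec : ∀ v : Fin n → ℝ,
      (min b₀ g₀ / c₁) * (v ⬝ᵥ (A⁻¹ *ᵥ v)) ≤ v ⬝ᵥ ((CB + S * CtA * Sᵀ) *ᵥ v) ∧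
        v ⬝ᵥ ((CB + S * CtA * Sᵀ) *ᵥ v) ≤ (max b₁ g₁ / c₀) * (v ⬝ᵥ (A⁻¹ *ᵥ v)) := by
    intro v
    have hp : 0 ≤ v ⬝ᵥ (B⁻¹ *ᵥ v) := dp_nonneg hB.inv v
    have hq : 0 ≤ (Sᵀ *ᵥ v) ⬝ᵥ (tA⁻¹ *ᵥ (Sᵀ *ᵥ v)) := dp_nonneg htA.inv _
    obtain ⟨k4, k4'⟩ := hCBspec v
    obtain ⟨k5, k5'⟩ := hCtAspec (Sᵀ *ᵥ v)
    have k2 : min b₀ g₀ * (v ⬝ᵥ (B⁻¹ *ᵥ v)) ≤ b₀ * (v ⬝ᵥ (B⁻¹ *ᵥ v)) :=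
      mul_le_mul_of_nonneg_right (min_le_left _ _) hp
    have k3 : min b₀ g₀ * ((Sᵀ *ᵥ v) ⬝ᵥ (tA⁻¹ *ᵥ (Sᵀ *ᵥ v)))
        ≤ g₀ * ((Sᵀ *ᵥ v) ⬝ᵥ (tA⁻¹ *ᵥ (Sᵀ *ᵥ v))) :=
      mul_le_mul_of_nonneg_right (min_le_right _ _) hq
    have k2' : b₁ * (v ⬝ᵥ (B⁻¹ *ᵥ v)) ≤ max b₁ g₁ * (v ⬝ᵥ (B⁻¹ *ᵥ v)) :=
      mul_le_mul_of_nonneg_right (le_max_left _ _) hp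
    have k3' : g₁ * ((Sᵀ *ᵥ v) ⬝ᵥ (tA⁻¹ *ᵥ (Sᵀ *ᵥ v)))
        ≤ max b₁ g₁ * ((Sᵀ *ᵥ v) ⬝ᵥ (tA⁻¹ *ᵥ (Sᵀ *ᵥ v))) :=
      mul_le_mul_of_nonneg_right (le_max_right _ _) hq
    have k1 : min b₀ g₀ * ((1 / c₁) * (v ⬝ᵥ (A⁻¹ *ᵥ v))) ≤ min b₀ g₀ * (v ⬝ᵥ (N *ᵥ v)) :=
      mul_le_mul_of_nonneg_left (hhigh v) hmin.le
    have k1' : max b₁ g₁ * (v ⬝ᵥ (N *ᵥ v)) ≤ max b₁ g₁ * ((1 / c₀) * (v ⬝ᵥ (A⁻¹ *ᵥ v))) := by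
      apply mul_le_mul_of_nonneg_left _ hmax.le
      rw [div_mul_eq_mul_div, le_div_iff₀ hc₀]
      linarith [hlow v]
    have hqn := quadN v
    rw [quadC v]
    constructor
    · have : min b₀ g₀ / c₁ * (v ⬝ᵥ (A⁻¹ *ᵥ v))
          = min b₀ g₀ * ((1 / c₁) * (v ⬝ᵥ (A⁻¹ *ᵥ v))) := by ring
      rw [this]
      nlinarith [k1, k2, k3, k4, k5, hqn]
    · have : max b₁ g₁ / c₀ * (v ⬝ᵥ (A⁻¹ *ᵥ v))
          = max b₁ g₁ * ((1 / c₀) * (v ⬝ᵥ (A⁻¹ *ᵥ v))) := by ring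
      rw [this]
      nlinarith [k1', k2', k3', k4', k5', hqn]
  have hCApd : (CB + S * CtA * Sᵀ).PosDef := hCB.add_posSemidef (sandwich_psd S hCtA.posSemidef)
  refine ⟨hCApd, hspec, ?_⟩
  -- eigenvalue bounds
  have eig_bound : ∀ μ : ℝ,
      Module.End.HasEigenvalue (Matrix.toLin' ((CB + S * CtA * Sᵀ) * A)) μ →
      min b₀ g₀ / c₁ ≤ μ ∧ μ ≤ max b₁ g₁ / c₀ := by
    intro μ hμ
    obtain ⟨x, hx⟩ := hμ.exists_hasEigenvector
    have hx0 : x ≠ 0 := hx.right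
    have hMx : ((CB + S * CtA * Sᵀ) * A) *ᵥ x = μ • x := by
      have := hx.apply_eq_smul
      rwa [Matrix.toLin'_apply] at this
    set y : Fin n → ℝ := A *ᵥ x with hy
    have hCy : (CB + S * CtA * Sᵀ) *ᵥ y = μ • x := by
      rw [hy, mulVec_mulVec, hMx]
    have hp : 0 < x ⬝ᵥ (A *ᵥ x) := dp_pos hA hx0
    have q1 : y ⬝ᵥ ((CB + S * CtA * Sᵀ) *ᵥ y) = μ * (x ⬝ᵥ (A *ᵥ x)) := by
      rw [hCy, dotProduct_smul, smul_eq_mul, hy, dotProduct_comm]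
    have q2 : y ⬝ᵥ (A⁻¹ *ᵥ y) = x ⬝ᵥ (A *ᵥ x) := by
      rw [hy, mulVec_mulVec, Matrix.nonsing_inv_mul _ (det_unit hA), one_mulVec,
        dotProduct_comm]
    obtain ⟨hl, hr⟩ := hspec y
    rw [q1, q2] at hl hr
    constructor
    · exact le_of_mul_le_mul_right hl hp
    · exact le_of_mul_le_mul_right hr hp
  intro μ ν hμ hν
  obtain ⟨hμ1, hμ2⟩ := eig_bound μ hμ
  obtain ⟨hν1, _⟩ := eig_bound ν hν
  have hcoef : 0 < (c₁ / c₀) * (max b₁ g₁ / min b₀ g₀) := by positivity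
  have key : (c₁ / c₀) * (max b₁ g₁ / min b₀ g₀) * (min b₀ g₀ / c₁) = max b₁ g₁ / c₀ := by
    field_simp
  calc μ ≤ max b₁ g₁ / c₀ := hμ2
    _ = (c₁ / c₀) * (max b₁ g₁ / min b₀ g₀) * (min b₀ g₀ / c₁) := key.symm
    _ ≤ (c₁ / c₀) * (max b₁ g₁ / min b₀ g₀) * ν := mul_le_mul_of_nonneg_left hν1 hcoef.le
end

section
/- Fictitious Space Lemma (matrix form): Let A be a symmetric positive definite n×n real matrix, Ã a symmetric positive definite m×m real matrix, and Π an n×m real matrix of rank n (i.e., the map ṽ ↦ Πṽ is surjective onto ℝⁿ). Assume there are constants c_Π > 0 and c_V > 0 such that (i) (Πṽ)ᵀ A (Πṽ) ≤ c_Π · ṽᵀ Ã ṽ for all ṽ ∈ ℝᵐ, and (ii) for every v ∈ ℝⁿ there exists ṽ ∈ ℝᵐ with Πṽ = v and ṽᵀ Ã ṽ ≤ c_V · vᵀ A v. Then for every v ∈ ℝⁿ, (1/c_V) · vᵀ A⁻¹ v ≤ vᵀ (Π Ã⁻¹ Πᵀ) v ≤ c_Π · vᵀ A⁻¹ v; in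 particular the spectral condition number of (Π Ã⁻¹ Πᵀ) A is at most c_Π · c_V. -/
open Matrix

lemma fsl_symm {k : ℕ} {M : Matrix (Fin k) (Fin k) ℝ} (hM : M.IsHermitian)
    (a b : Fin k → ℝ) : a ⬝ᵥ (M *ᵥ b) = b ⬝ᵥ (M *ᵥ a) := by
  have ht : Mᵀ = M := by rw [← conjTranspose_eq_transpose_of_trivial]; exact hM.eq
  rw [dotProduct_mulVec, ← mulVec_transpose, ht, dotProduct_comm]

lemma fsl_cs {k : ℕ} {M : Matrix (Fin k) (Fin k) ℝ} (hM : M.PosSemidef)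
    (x y : Fin k → ℝ) : (x ⬝ᵥ (M *ᵥ y))^2 ≤ (x ⬝ᵥ (M *ᵥ x)) * (y ⬝ᵥ (M *ᵥ y)) := by
  have key : ∀ t : ℝ,
      0 ≤ (y ⬝ᵥ (M *ᵥ y)) * (t * t) + (2 * (x ⬝ᵥ (M *ᵥ y))) * t + x ⬝ᵥ (M *ᵥ x) := by
    intro t
    have h0 := hM.dotProduct_mulVec_nonneg (x + t • y)
    simp only [star_trivial, mulVec_add, mulVec_smul, dotProduct_add, add_dotProduct,
      dotProduct_smul, smul_dotProduct, smul_eq_mul] at h0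
    rw [← fsl_symm hM.1 x y] at h0
    ring_nf at h0 ⊢
    linarith [h0]
  have := discrim_le_zero key
  rw [discrim] at this
  nlinarith [this]

lemma fsl_cs_inv {k : ℕ} {M : Matrix (Fin k) (Fin k) ℝ} (hM : M.PosDef)
    (x y : Fin k → ℝ) : (x ⬝ᵥ y)^2 ≤ (x ⬝ᵥ (M⁻¹ *ᵥ x)) * (y ⬝ᵥ (M *ᵥ y)) := by
  letI := hM.isUnit.invertible
  have hcs := fsl_cs hM.posSemidef (M⁻¹ *ᵥ x) y
  have h1 : (M⁻¹ *ᵥ x) ⬝ᵥ (M *ᵥ y) = x ⬝ᵥ y := by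
    rw [fsl_symm hM.1, mulVec_mulVec, Matrix.mul_inv_of_invertible, one_mulVec,
      dotProduct_comm]
  have h2 : (M⁻¹ *ᵥ x) ⬝ᵥ (M *ᵥ (M⁻¹ *ᵥ x)) = x ⬝ᵥ (M⁻¹ *ᵥ x) := by
    rw [mulVec_mulVec, Matrix.mul_inv_of_invertible, one_mulVec, dotProduct_comm]
  rwa [h1, h2] at hcs

/-- **Fictitious Space Lemma** (matrix form).  Let `A` (n×n) and `tA` (m×m) be symmetric
positive definite real matrices and `P` an `n×m` matrix with `ṽ ↦ P ṽ` surjective onto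
`ℝⁿ`.  If (i) `(Pṽ)ᵀ A (Pṽ) ≤ c_P ṽᵀ tA ṽ` for all `ṽ`, and (ii) every `v` admits a
lifting `ṽ` with `P ṽ = v` and `ṽᵀ tA ṽ ≤ c_V vᵀ A v`, then
`(1/c_V) vᵀ A⁻¹ v ≤ vᵀ (P tA⁻¹ Pᵀ) v ≤ c_P vᵀ A⁻¹ v`; in particular any two (real)
eigenvalues `μ, ν` of `(P tA⁻¹ Pᵀ) A` satisfy `μ ≤ c_P c_V ν`, i.e. the spectral
condition number of `(P tA⁻¹ Pᵀ) A` is at most `c_P · c_V`. -/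
theorem fictitious_space_lemma (n m : ℕ)
    (A : Matrix (Fin n) (Fin n) ℝ) (tA : Matrix (Fin m) (Fin m) ℝ)
    (P : Matrix (Fin n) (Fin m) ℝ)
    (hA : A.PosDef) (htA : tA.PosDef)
    (hsurj : Function.Surjective fun tv : Fin m → ℝ => P *ᵥ tv)
    (cP cV : ℝ) (hcP : 0 < cP) (hcV : 0 < cV)
    (h1 : ∀ tv : Fin m → ℝ, (P *ᵥ tv) ⬝ᵥ (A *ᵥ (P *ᵥ tv)) ≤ cP * (tv ⬝ᵥ (tA *ᵥ tv)))
    (h2 : ∀ v : Fin n → ℝ, ∃ tv : Fin m → ℝ,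
      P *ᵥ tv = v ∧ tv ⬝ᵥ (tA *ᵥ tv) ≤ cV * (v ⬝ᵥ (A *ᵥ v))) :
    (∀ v : Fin n → ℝ,
        (1 / cV) * (v ⬝ᵥ (A⁻¹ *ᵥ v)) ≤ v ⬝ᵥ ((P * tA⁻¹ * Pᵀ) *ᵥ v) ∧
          v ⬝ᵥ ((P * tA⁻¹ * Pᵀ) *ᵥ v) ≤ cP * (v ⬝ᵥ (A⁻¹ *ᵥ v))) ∧
      ∀ μ ν : ℝ,
        Module.End.HasEigenvalue (Matrix.toLin' ((P * tA⁻¹ * Pᵀ) * A)) μ →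
        Module.End.HasEigenvalue (Matrix.toLin' ((P * tA⁻¹ * Pᵀ) * A)) ν →
        μ ≤ cP * cV * ν := by
  have hAinv : (A⁻¹).PosDef := hA.inv
  have htAinv : (tA⁻¹).PosDef := htA.inv
  letI := hA.isUnit.invertible
  letI := htA.isUnit.invertible
  have hPdot : ∀ (v : Fin n → ℝ) (w : Fin m → ℝ),
      v ⬝ᵥ (P *ᵥ w) = (Pᵀ *ᵥ v) ⬝ᵥ w := by
    intro v w
    rw [dotProduct_mulVec, ← mulVec_transpose]
  have hBquad : ∀ v : Fin n → ℝ, v ⬝ᵥ ((P * tA⁻¹ * Pᵀ) *ᵥ v)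
      = (Pᵀ *ᵥ v) ⬝ᵥ (tA⁻¹ *ᵥ (Pᵀ *ᵥ v)) := by
    intro v
    rw [← mulVec_mulVec, ← mulVec_mulVec, hPdot]
  have main : ∀ v : Fin n → ℝ,
      (1 / cV) * (v ⬝ᵥ (A⁻¹ *ᵥ v)) ≤ v ⬝ᵥ ((P * tA⁻¹ * Pᵀ) *ᵥ v) ∧
        v ⬝ᵥ ((P * tA⁻¹ * Pᵀ) *ᵥ v) ≤ cP * (v ⬝ᵥ (A⁻¹ *ᵥ v)) := by
    intro v
    have hs0 : 0 ≤ v ⬝ᵥ ((P * tA⁻¹ * Pᵀ) *ᵥ v) := by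
      rw [hBquad]
      simpa using htAinv.posSemidef.dotProduct_mulVec_nonneg (Pᵀ *ᵥ v)
    have hd0 : 0 ≤ v ⬝ᵥ (A⁻¹ *ᵥ v) := by
      simpa using hAinv.posSemidef.dotProduct_mulVec_nonneg v
    constructor
    · -- lower bound
      obtain ⟨tw, hPtw, htw⟩ := h2 (A⁻¹ *ᵥ v)
      have hAw : (A⁻¹ *ᵥ v) ⬝ᵥ (A *ᵥ (A⁻¹ *ᵥ v)) = v ⬝ᵥ (A⁻¹ *ᵥ v) := by
        rw [mulVec_mulVec, Matrix.mul_inv_of_invertible, one_mulVec, dotProduct_comm]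
      rw [hAw] at htw
      have hvw : v ⬝ᵥ (A⁻¹ *ᵥ v) = (Pᵀ *ᵥ v) ⬝ᵥ tw := by
        rw [← hPtw, hPdot]
      have hcs := fsl_cs_inv htA (Pᵀ *ᵥ v) tw
      rw [← hBquad] at hcs
      rcases eq_or_lt_of_le hd0 with hd | hd
      · rw [← hd]; simpa using hs0
      · rw [div_mul_eq_mul_div, one_mul, div_le_iff₀ hcV]
        have key : (v ⬝ᵥ (A⁻¹ *ᵥ v))^2 ≤ (v ⬝ᵥ ((P * tA⁻¹ * Pᵀ) *ᵥ v)) * (cV * (v ⬝ᵥ (A⁻¹ *ᵥ v))) := by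
          calc (v ⬝ᵥ (A⁻¹ *ᵥ v))^2 = ((Pᵀ *ᵥ v) ⬝ᵥ tw)^2 := by rw [hvw]
            _ ≤ (v ⬝ᵥ ((P * tA⁻¹ * Pᵀ) *ᵥ v)) * (tw ⬝ᵥ (tA *ᵥ tw)) := hcs
            _ ≤ (v ⬝ᵥ ((P * tA⁻¹ * Pᵀ) *ᵥ v)) * (cV * (v ⬝ᵥ (A⁻¹ *ᵥ v))) :=
              mul_le_mul_of_nonneg_left htw hs0
        nlinarith [key, hd]
    · -- upper bound
      set tv := tA⁻¹ *ᵥ (Pᵀ *ᵥ v) with htv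
      have hdots : v ⬝ᵥ (P *ᵥ tv) = v ⬝ᵥ ((P * tA⁻¹ * Pᵀ) *ᵥ v) := by
        rw [hPdot, hBquad]
      have htAtv : tA *ᵥ tv = Pᵀ *ᵥ v := by
        rw [htv, mulVec_mulVec, Matrix.mul_inv_of_invertible, one_mulVec]
      have htvs : tv ⬝ᵥ (tA *ᵥ tv) = v ⬝ᵥ ((P * tA⁻¹ * Pᵀ) *ᵥ v) := by
        rw [htAtv, hBquad, htv, dotProduct_comm]
      have hcs := fsl_cs_inv hA v (P *ᵥ tv)
      have h1tv := h1 tv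
      rw [hdots] at hcs
      rw [htvs] at h1tv
      rcases eq_or_lt_of_le hs0 with hs | hs
      · rw [← hs]; positivity
      · have key : (v ⬝ᵥ ((P * tA⁻¹ * Pᵀ) *ᵥ v))^2
            ≤ (v ⬝ᵥ (A⁻¹ *ᵥ v)) * (cP * (v ⬝ᵥ ((P * tA⁻¹ * Pᵀ) *ᵥ v))) :=
          le_trans hcs (mul_le_mul_of_nonneg_left h1tv hd0)
        nlinarith [key, hs]
  refine ⟨main, ?_⟩
  have hbound : ∀ μ : ℝ,
      Module.End.HasEigenvalue (Matrix.toLin' ((P * tA⁻¹ * Pᵀ) * A)) μ →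
      1 / cV ≤ μ ∧ μ ≤ cP := by
    intro μ hμ
    obtain ⟨x, hx⟩ := hμ.exists_hasEigenvector
    have hx0 : x ≠ 0 := hx.2
    have hxe : (P * tA⁻¹ * Pᵀ * A) *ᵥ x = μ • x := by
      have := hx.apply_eq_smul
      rwa [toLin'_apply] at this
    have hy0 : A *ᵥ x ≠ 0 := by
      intro h
      have hp := hA.dotProduct_mulVec_pos hx0
      rw [star_trivial, h, dotProduct_zero] at hp
      exact lt_irrefl 0 hp
    have hB_y : (P * tA⁻¹ * Pᵀ) *ᵥ (A *ᵥ x) = μ • x := by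
      rw [mulVec_mulVec]; exact hxe
    have hx_y : A⁻¹ *ᵥ (A *ᵥ x) = x := by
      rw [mulVec_mulVec, Matrix.inv_mul_of_invertible, one_mulVec]
    have hyBy : (A *ᵥ x) ⬝ᵥ ((P * tA⁻¹ * Pᵀ) *ᵥ (A *ᵥ x))
        = μ * ((A *ᵥ x) ⬝ᵥ (A⁻¹ *ᵥ (A *ᵥ x))) := by
      rw [hB_y, hx_y]
      simp [dotProduct_smul, smul_eq_mul]
    have hdpos : 0 < (A *ᵥ x) ⬝ᵥ (A⁻¹ *ᵥ (A *ᵥ x)) := by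
      have := hAinv.dotProduct_mulVec_pos hy0
      simpa using this
    obtain ⟨hl, hu⟩ := main (A *ᵥ x)
    rw [hyBy] at hl hu
    exact ⟨le_of_mul_le_mul_right hl hdpos, le_of_mul_le_mul_right hu hdpos⟩
  intro μ ν hμ hν
  obtain ⟨_, hμ2⟩ := hbound μ hμ
  obtain ⟨hν1, _⟩ := hbound ν hν
  have h3 : cP * cV * (1 / cV) ≤ cP * cV * ν :=
    mul_le_mul_of_nonneg_left hν1 (by positivity)
  calc μ ≤ cP := hμ2
    _ = cP * cV * (1 / cV) := by field_simp
    _ ≤ cP * cV * ν := h3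
end
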